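/- Consider Round-Robin (Mechanism 1) run on a profile (v_1, …, v_n) of normalized, monotone valuations over G, and suppose agent i's true valuation v_i is subadditive and cancelable. Then for every normalized, monotone misreport v_i', the bundle agent i receives when Mechanism 1 is run on the profile with v_i replaced by v_i' has v_i-value at most 2 times the v_i-value of the bundle he receives when Mechanism 1 is run on the truthful profile. Consequently, Mechanism 1 admits an incentive ratio of at most 2 for subadditive cancelable valuations. -/

import Mathlib

/-- A valuation: normalized and monotone set function on goods. -/
def IsValuation {m : ℕ} (v : Finset (Fin m) → ℝ) : Prop :=
  v ∅ = 0 ∧ ∀ S T : Finset (Fin m), S ⊆ T → v S ≤ v T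

def AdditiveVal {m : ℕ} (v : Finset (Fin m) → ℝ) : Prop :=
  ∀ S T : Finset (Fin m), Disjoint S T → v (S ∪ T) = v S + v T

def SubadditiveVal {m : ℕ} (v : Finset (Fin m) → ℝ) : Prop :=
  ∀ S T : Finset (Fin m), v (S ∪ T) ≤ v S + v T

def CancelableVal {m : ℕ} (v : Finset (Fin m) → ℝ) : Prop :=
  ∀ S T : Finset (Fin m), ∀ g : Fin m, g ∉ S ∪ T → v (insert g S) > v (insert g T) → v S > v T

def SubmodularVal {m : ℕ} (v : Finset (Fin m) → ℝ) : Prop :=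
  ∀ S T : Finset (Fin m), S ⊆ T → ∀ g : Fin m, g ∉ T →
    v (insert g T) - v T ≤ v (insert g S) - v S

def MultiplicativeVal {m : ℕ} (v : Finset (Fin m) → ℝ) : Prop :=
  (∀ g : Fin m, 1 ≤ v {g}) ∧ ∀ S : Finset (Fin m), S.Nonempty → v S = ∏ g ∈ S, v {g}

def XOSVal {m : ℕ} (v : Finset (Fin m) → ℝ) : Prop :=
  ∃ (k : ℕ) (f : Fin (k + 1) → Finset (Fin m) → ℝ),
    (∀ j, AdditiveVal (f j)) ∧
    ∀ S : Finset (Fin m), (∃ j, v S = f j S) ∧ ∀ j, f j S ≤ v S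

def IsAllocation {n m : ℕ} (A : Fin n → Finset (Fin m)) : Prop :=
  (∀ i j : Fin n, i ≠ j → Disjoint (A i) (A j)) ∧ ∀ g : Fin m, ∃ i, g ∈ A i

/-- `α`-EF1. -/
def EF1 {n m : ℕ} (α : ℝ) (v : Fin n → Finset (Fin m) → ℝ) (A : Fin n → Finset (Fin m)) : Prop :=
  ∀ i j : Fin n, A j = ∅ ∨ ∃ g ∈ A j, α * v i (A j \ {g}) ≤ v i (A i)

/-- The remaining good maximizing `f`, ties broken in favor of the smallest index. -/
noncomputable def chooseFavorite {m : ℕ} (f : Fin m → ℝ) (S : Finset (Fin m))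
    (h : S.Nonempty) : Fin m :=
  (S.filter fun g => ∀ h' ∈ S, f h' ≤ f g).min' (by
    obtain ⟨b, hb, hmax⟩ := S.exists_max_image f h
    exact ⟨b, Finset.mem_filter.mpr ⟨hb, hmax⟩⟩)

/-- The state (bundles, remaining goods) of round-robin after `k` stages, where at stage
`k+1` the agent `k % n` picks a remaining good maximizing `score i (current bundle of i)`,
ties broken towards the smallest index. -/
noncomputable def rrState {n m : ℕ} (score : Fin n → Finset (Fin m) → Fin m → ℝ) :
    ℕ → (Fin n → Finset (Fin m)) × Finset (Fin m)
  | 0 => (fun _ => (∅ : Finset (Fin m)), Finset.univ)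
  | k + 1 =>
      let st := rrState score k
      if hn : 0 < n then
        if h : st.2.Nonempty then
          let i : Fin n := ⟨k % n, Nat.mod_lt k hn⟩
          let g := chooseFavorite (score i (st.1 i)) st.2 h
          (Function.update st.1 i (insert g (st.1 i)), st.2.erase g)
        else st
      else st

/-- Mechanism 1: Round-Robin where each agent picks a remaining good of largest value. -/
noncomputable def roundRobin1 {n m : ℕ} (v : Fin n → Finset (Fin m) → ℝ) :
    Fin n → Finset (Fin m) :=
  (rrState (fun i _ g => v i {g}) m).1

/-- Mechanism 2: Round-Robin where each agent picks a remaining good of largest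
marginal value with respect to his current bundle. -/
noncomputable def roundRobin2 {n m : ℕ} (v : Fin n → Finset (Fin m) → ℝ) :
    Fin n → Finset (Fin m) :=
  (rrState (fun i A g => v i (insert g A) - v i A) m).1

noncomputable def expTransform {m : ℕ} (δ : ℝ) (v : Finset (Fin m) → ℝ) :
    Finset (Fin m) → ℝ :=
  fun S => if S = ∅ then 0 else Real.exp (δ * v S)

def addVal {m : ℕ} (w : Fin m → ℝ) : Finset (Fin m) → ℝ := fun S => ∑ g ∈ S, w g

def Envies {n m : ℕ} (v : Fin n → Finset (Fin m) → ℝ) (A : Fin n → Finset (Fin m))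
    (i j : Fin n) : Prop :=
  v i (A i) < v i (A j)

def Unenvied {n m : ℕ} (v : Fin n → Finset (Fin m) → ℝ) (A : Fin n → Finset (Fin m))
    (j : Fin n) : Prop :=
  ∀ i : Fin n, ¬ Envies v A i j

def EnvyCycleStep {n m : ℕ} (v : Fin n → Finset (Fin m) → ℝ)
    (A A' : Fin n → Finset (Fin m)) : Prop :=
  ∃ σ : Equiv.Perm (Fin n), σ.IsCycle ∧ (∀ i, σ i ≠ i → Envies v A i (σ i)) ∧
    ∀ i, A' i = A (σ i)

def HasEnvyCycle {n m : ℕ} (v : Fin n → Finset (Fin m) → ℝ)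
    (A : Fin n → Finset (Fin m)) : Prop :=
  ∃ σ : Equiv.Perm (Fin n), σ.IsCycle ∧ ∀ i, σ i ≠ i → Envies v A i (σ i)

def Eliminated {n m : ℕ} (v : Fin n → Finset (Fin m) → ℝ)
    (A B : Fin n → Finset (Fin m)) : Prop :=
  Relation.ReflTransGen (EnvyCycleStep v) A B ∧ ¬ HasEnvyCycle v B

inductive EGP {n m : ℕ} (v : Fin n → Finset (Fin m) → ℝ) :
    ℕ → (Fin n → Finset (Fin m)) → Prop
  | init : EGP v 0 (fun _ => ∅)
  | step {k : ℕ} (hk : k < m) {A C : Fin n → Finset (Fin m)} (j : Fin n) :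
      EGP v k A → Unenvied v A j → (∀ j' : Fin n, Unenvied v A j' → j ≤ j') →
      Eliminated v (Function.update A j (insert ⟨k, hk⟩ (A j))) C →
      EGP v (k + 1) C

inductive EGP2 {n m : ℕ} (v : Fin n → Finset (Fin m) → ℝ) :
    ℕ → (Fin n → Finset (Fin m)) → Finset (Fin m) → Prop
  | init : EGP2 v 0 (fun _ => ∅) Finset.univ
  | step {k : ℕ} {A C : Fin n → Finset (Fin m)} {S : Finset (Fin m)} (j : Fin n) (g : Fin m) :
      EGP2 v k A S → Unenvied v A j → (∀ j' : Fin n, Unenvied v A j' → j ≤ j') →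
      g ∈ S → (∀ h ∈ S, v j {h} ≤ v j {g}) → (∀ h ∈ S, v j {g} ≤ v j {h} → g ≤ h) →
      Eliminated v (Function.update A j (insert g (A j))) C →
      EGP2 v (k + 1) C (S.erase g)

section CF
variable {m : ℕ}

lemma cf_spec (φ : Fin m → ℝ) (S : Finset (Fin m)) (h : S.Nonempty) :
    chooseFavorite φ S h ∈ S.filter fun g => ∀ h' ∈ S, φ h' ≤ φ g :=
  Finset.min'_mem _ _

lemma cf_mem (φ : Fin m → ℝ) (S : Finset (Fin m)) (h : S.Nonempty) :
    chooseFavorite φ S h ∈ S := (Finset.mem_filter.1 (cf_spec φ S h)).1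

lemma cf_le (φ : Fin m → ℝ) (S : Finset (Fin m)) (h : S.Nonempty) :
    ∀ g ∈ S, φ g ≤ φ (chooseFavorite φ S h) := (Finset.mem_filter.1 (cf_spec φ S h)).2

lemma cf_antisymm (φ : Fin m → ℝ) (S T : Finset (Fin m)) (hS : S.Nonempty) (hT : T.Nonempty)
    (h1 : chooseFavorite φ S hS ∈ T) (h2 : chooseFavorite φ T hT ∈ S) :
    chooseFavorite φ S hS = chooseFavorite φ T hT := by
  set x := chooseFavorite φ S hS with hx
  set y := chooseFavorite φ T hT with hy
  have hxy : φ x ≤ φ y := cf_le φ T hT x h1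
  have hyx : φ y ≤ φ x := cf_le φ S hS y h2
  have hxe : φ x = φ y := le_antisymm hxy hyx
  have hxT : x ∈ T.filter fun g => ∀ h' ∈ T, φ h' ≤ φ g := by
    refine Finset.mem_filter.2 ⟨h1, fun h' hh' => ?_⟩
    exact (cf_le φ T hT h' hh').trans hxe.ge
  have hyS : y ∈ S.filter fun g => ∀ h' ∈ S, φ h' ≤ φ g := by
    refine Finset.mem_filter.2 ⟨h2, fun h' hh' => ?_⟩
    exact (cf_le φ S hS h' hh').trans hxe.le
  exact le_antisymm (Finset.min'_le _ _ hyS) (Finset.min'_le _ _ hxT)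

end CF

section RRbasic
variable {n m : ℕ}

/-- The state of round-robin with bundle-independent scores. -/
noncomputable def rrS (f : Fin n → Fin m → ℝ) (k : ℕ) :
    (Fin n → Finset (Fin m)) × Finset (Fin m) :=
  rrState (fun j (_ : Finset (Fin m)) g => f j g) k

noncomputable def Rk (f : Fin n → Fin m → ℝ) (k : ℕ) : Finset (Fin m) := (rrS f k).2

noncomputable def Bd (f : Fin n → Fin m → ℝ) (k : ℕ) : Fin n → Finset (Fin m) := (rrS f k).1

variable (f : Fin n → Fin m → ℝ)

@[simp] lemma Rk_zero : Rk f 0 = (Finset.univ : Finset (Fin m)) := rfl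

@[simp] lemma Bd_zero (j : Fin n) : Bd f 0 j = ∅ := rfl

/-- The pick at stage `k`. -/
noncomputable def pk (hn : 0 < n) (k : ℕ) (h : (Rk f k).Nonempty) : Fin m :=
  chooseFavorite (fun g => f ⟨k % n, Nat.mod_lt k hn⟩ g) (Rk f k) h

lemma rrS_succ (hn : 0 < n) (k : ℕ) (h : (Rk f k).Nonempty) :
    rrS f (k + 1) =
      (Function.update (Bd f k) ⟨k % n, Nat.mod_lt k hn⟩
        (insert (pk f hn k h) (Bd f k ⟨k % n, Nat.mod_lt k hn⟩)),
       (Rk f k).erase (pk f hn k h)) := by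
  have h' : (rrState (fun j (_ : Finset (Fin m)) g => f j g) k).2.Nonempty := h
  show rrState _ (k+1) = _
  rw [rrState]
  simp only [dif_pos hn, dif_pos h']
  rfl

lemma rrS_succ_frozen (k : ℕ) (h : ¬ (Rk f k).Nonempty) :
    rrS f (k + 1) = rrS f k := by
  have h' : ¬ (rrState (fun j (_ : Finset (Fin m)) g => f j g) k).2.Nonempty := h
  show rrState _ (k+1) = _
  rw [rrState]
  by_cases hn : 0 < n
  · simp only [dif_pos hn, dif_neg h']
    rfl
  · simp only [dif_neg hn]
    rfl
lemma Rk_succ (hn : 0 < n) (k : ℕ) (h : (Rk f k).Nonempty) :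
    Rk f (k + 1) = (Rk f k).erase (pk f hn k h) := by
  show (rrS f (k+1)).2 = _
  rw [rrS_succ f hn k h]

lemma Bd_succ (hn : 0 < n) (k : ℕ) (h : (Rk f k).Nonempty) :
    Bd f (k + 1) = Function.update (Bd f k) ⟨k % n, Nat.mod_lt k hn⟩
        (insert (pk f hn k h) (Bd f k ⟨k % n, Nat.mod_lt k hn⟩)) := by
  show (rrS f (k+1)).1 = _
  rw [rrS_succ f hn k h]

lemma Rk_succ_frozen (k : ℕ) (h : ¬ (Rk f k).Nonempty) : Rk f (k + 1) = Rk f k := by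
  show (rrS f (k+1)).2 = _
  rw [rrS_succ_frozen f k h]; rfl

lemma Bd_succ_frozen (k : ℕ) (h : ¬ (Rk f k).Nonempty) : Bd f (k + 1) = Bd f k := by
  show (rrS f (k+1)).1 = _
  rw [rrS_succ_frozen f k h]; rfl

lemma pk_mem (hn : 0 < n) (k : ℕ) (h : (Rk f k).Nonempty) : pk f hn k h ∈ Rk f k :=
  cf_mem _ _ _

lemma pk_max (hn : 0 < n) (k : ℕ) (h : (Rk f k).Nonempty) :
    ∀ g ∈ Rk f k, f ⟨k % n, Nat.mod_lt k hn⟩ g ≤ f ⟨k % n, Nat.mod_lt k hn⟩ (pk f hn k h) :=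
  cf_le _ _ _

lemma card_Rk (hn : 0 < n) (k : ℕ) : (Rk f k).card = m - k := by
  induction k with
  | zero => simp
  | succ k ih =>
    by_cases h : (Rk f k).Nonempty
    · rw [Rk_succ f hn k h, Finset.card_erase_of_mem (pk_mem f hn k h), ih]
      omega
    · rw [Rk_succ_frozen f k h, ih]
      have : (Rk f k).card = 0 := by
        simpa [Finset.card_eq_zero] using (Finset.not_nonempty_iff_eq_empty.1 h)
      omega

lemma Rk_nonempty (hn : 0 < n) (k : ℕ) (hk : k < m) : (Rk f k).Nonempty := by
  rw [← Finset.card_pos, card_Rk f hn]; omega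

lemma Rk_succ_subset (hn : 0 < n) (k : ℕ) : Rk f (k + 1) ⊆ Rk f k := by
  by_cases h : (Rk f k).Nonempty
  · rw [Rk_succ f hn k h]; exact Finset.erase_subset _ _
  · rw [Rk_succ_frozen f k h]

lemma Rk_subset (hn : 0 < n) {k k' : ℕ} (h : k ≤ k') : Rk f k' ⊆ Rk f k := by
  induction k' with
  | zero => simp_all
  | succ k' ih =>
    rcases Nat.eq_or_lt_of_le h with rfl | h'
    · exact subset_rfl
    · exact (Rk_succ_subset f hn k').trans (ih (Nat.lt_succ_iff.1 h'))

lemma Bd_subset_succ (hn : 0 < n) (k : ℕ) (j : Fin n) : Bd f k j ⊆ Bd f (k + 1) j := by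
  by_cases h : (Rk f k).Nonempty
  · rw [Bd_succ f hn k h, Function.update_apply]
    split
    · next he => rw [he]; exact Finset.subset_insert _ _
    · exact subset_rfl
  · rw [Bd_succ_frozen f k h]

lemma Bd_subset (hn : 0 < n) {k k' : ℕ} (h : k ≤ k') (j : Fin n) : Bd f k j ⊆ Bd f k' j := by
  induction k' with
  | zero => simp_all
  | succ k' ih =>
    rcases Nat.eq_or_lt_of_le h with rfl | h'
    · exact subset_rfl
    · exact (ih (Nat.lt_succ_iff.1 h')).trans (Bd_subset_succ f hn k' j)

lemma Bd_succ_subset_insert (hn : 0 < n) (k : ℕ) (j : Fin n) (h : (Rk f k).Nonempty) :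
    Bd f (k + 1) j ⊆ insert (pk f hn k h) (Bd f k j) := by
  rw [Bd_succ f hn k h, Function.update_apply]
  split
  · next he => rw [he]
  · exact Finset.subset_insert _ _

lemma Bd_disjoint_Rk (hn : 0 < n) (k : ℕ) (j : Fin n) : ∀ g ∈ Bd f k j, g ∉ Rk f k := by
  induction k with
  | zero => simp
  | succ k ih =>
    intro g hg
    by_cases h : (Rk f k).Nonempty
    · have hg' := Bd_succ_subset_insert f hn k j h hg
      rw [Rk_succ f hn k h]
      rcases Finset.mem_insert.1 hg' with rfl | hg''
      · exact fun hc => (Finset.mem_erase.1 hc).1 rfl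
      · exact fun hc => ih g hg'' (Finset.mem_erase.1 hc).2
    · rw [Rk_succ_frozen f k h]
      rw [Bd_succ_frozen f k h] at hg
      exact ih g hg

lemma Bd_final_subset (hn : 0 < n) {k k' : ℕ} (h : k ≤ k') (j : Fin n) :
    Bd f k' j ⊆ Bd f k j ∪ Rk f k := by
  induction k' with
  | zero =>
    have : k = 0 := Nat.le_zero.1 h
    subst this; exact Finset.subset_union_left
  | succ k' ih =>
    rcases Nat.eq_or_lt_of_le h with rfl | h'
    · exact Finset.subset_union_left
    · have hk : k ≤ k' := Nat.lt_succ_iff.1 h'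
      by_cases hne : (Rk f k').Nonempty
      · intro g hg
        rcases Finset.mem_insert.1 (Bd_succ_subset_insert f hn k' j hne hg) with rfl | hg'
        · exact Finset.mem_union_right _ (Rk_subset f hn hk (pk_mem f hn k' hne))
        · exact ih hk hg'
      · rw [Bd_succ_frozen f k' hne]; exact ih hk

lemma card_Bd_succ (hn : 0 < n) (k : ℕ) (j : Fin n) :
    (Bd f (k + 1) j).card ≤ (Bd f k j).card + 1 := by
  by_cases h : (Rk f k).Nonempty
  · exact le_trans (Finset.card_le_card (Bd_succ_subset_insert f hn k j h))
      (Finset.card_insert_le _ _)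
  · rw [Bd_succ_frozen f k h]; omega

lemma Bd_succ_ne (hn : 0 < n) (k : ℕ) (j : Fin n) (hj : k % n ≠ j.val) :
    Bd f (k + 1) j = Bd f k j := by
  by_cases h : (Rk f k).Nonempty
  · rw [Bd_succ f hn k h, Function.update_apply, if_neg]
    intro he; exact hj (by rw [he])
  · rw [Bd_succ_frozen f k h]

lemma Bd_succ_own (hn : 0 < n) (k : ℕ) (h : (Rk f k).Nonempty) :
    Bd f (k + 1) ⟨k % n, Nat.mod_lt k hn⟩ =
      insert (pk f hn k h) (Bd f k ⟨k % n, Nat.mod_lt k hn⟩) := by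
  rw [Bd_succ f hn k h, Function.update_self]

end RRbasic
section TwoRuns
variable {α : Type*} [DecidableEq α]

lemma sdiff_erase_card_le_succ (S T : Finset α) (g g' : α) :
    ((T.erase g') \ (S.erase g)).card ≤ (T \ S).card + 1 := by
  have hsub : (T.erase g') \ (S.erase g) ⊆ insert g (T \ S) := by
    intro x hx
    rcases Finset.mem_sdiff.1 hx with ⟨hxT, hxS⟩
    rcases Finset.mem_erase.1 hxT with ⟨hxg', hxT'⟩
    by_cases hxg : x = g
    · rw [hxg]; exact Finset.mem_insert_self _ _
    · refine Finset.mem_insert_of_mem (Finset.mem_sdiff.2 ⟨hxT', fun hxSS => hxS ?_⟩)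
      exact Finset.mem_erase.2 ⟨hxg, hxSS⟩
  exact le_trans (Finset.card_le_card hsub) (Finset.card_insert_le _ _)

end TwoRuns

section CFdiff
variable {m : ℕ}

lemma cf_erase_sdiff (φ : Fin m → ℝ) (S T : Finset (Fin m)) (hS : S.Nonempty)
    (hT : T.Nonempty) :
    ((T.erase (chooseFavorite φ T hT)) \ (S.erase (chooseFavorite φ S hS))).card ≤
      (T \ S).card := by
  set g := chooseFavorite φ S hS with hg
  set g' := chooseFavorite φ T hT with hg'
  by_cases hgg : g = g'
  · refine Finset.card_le_card fun x hx => ?_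
    rcases Finset.mem_sdiff.1 hx with ⟨hxT, hxS⟩
    rcases Finset.mem_erase.1 hxT with ⟨hxg', hxT'⟩
    refine Finset.mem_sdiff.2 ⟨hxT', fun hxSS => ?_⟩
    by_cases hxg : x = g
    · exact hxg' (hxg.trans hgg)
    · exact hxS (Finset.mem_erase.2 ⟨hxg, hxSS⟩)
  · have hnot : ¬ (g ∈ T ∧ g' ∈ S) := fun ⟨h1, h2⟩ => hgg (cf_antisymm φ S T hS hT h1 h2)
    by_cases hgT : g ∈ T
    · have hg'S : g' ∉ S := fun hc => hnot ⟨hgT, hc⟩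
      have hg'TS : g' ∈ T \ S := Finset.mem_sdiff.2 ⟨cf_mem φ T hT, hg'S⟩
      have hsub : (T.erase g') \ (S.erase g) ⊆ insert g ((T \ S).erase g') := by
        intro x hx
        rcases Finset.mem_sdiff.1 hx with ⟨hxT, hxS⟩
        rcases Finset.mem_erase.1 hxT with ⟨hxg', hxT'⟩
        by_cases hxg : x = g
        · rw [hxg]; exact Finset.mem_insert_self _ _
        · refine Finset.mem_insert_of_mem (Finset.mem_erase.2 ⟨hxg', Finset.mem_sdiff.2
            ⟨hxT', fun hxSS => hxS (Finset.mem_erase.2 ⟨hxg, hxSS⟩)⟩⟩)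
      calc ((T.erase g') \ (S.erase g)).card ≤ (insert g ((T \ S).erase g')).card :=
            Finset.card_le_card hsub
        _ ≤ ((T \ S).erase g').card + 1 := Finset.card_insert_le _ _
        _ = (T \ S).card - 1 + 1 := by rw [Finset.card_erase_of_mem hg'TS]
        _ ≤ (T \ S).card := by
            have : 1 ≤ (T \ S).card := Finset.card_pos.2 ⟨g', hg'TS⟩
            omega
    · refine Finset.card_le_card fun x hx => ?_
      rcases Finset.mem_sdiff.1 hx with ⟨hxT, hxS⟩
      rcases Finset.mem_erase.1 hxT with ⟨hxg', hxT'⟩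
      refine Finset.mem_sdiff.2 ⟨hxT', fun hxSS => ?_⟩
      by_cases hxg : x = g
      · exact hgT (hxg ▸ hxT')
      · exact hxS (Finset.mem_erase.2 ⟨hxg, hxSS⟩)

end CFdiff
/-- Number of stages `< k` belonging to residue `iv` mod `n`. -/
def cntI (n iv k : ℕ) : ℕ := ((Finset.range k).filter (fun x => x % n = iv)).card

lemma cntI_succ (n iv k : ℕ) :
    cntI n iv (k + 1) = cntI n iv k + (if k % n = iv then 1 else 0) := by
  unfold cntI
  rw [Finset.range_add_one, Finset.filter_insert]
  split
  · rw [Finset.card_insert_of_notMem (by simp)]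
  · simp

lemma cntI_mono (n iv : ℕ) {k k' : ℕ} (h : k ≤ k') : cntI n iv k ≤ cntI n iv k' :=
  Finset.card_le_card (Finset.filter_subset_filter _ (by simpa using Finset.range_subset_range.2 h))

lemma mod_shift (n iv j r : ℕ) : (iv + j * n + r) % n = (iv + r) % n := by
  rw [Nat.add_right_comm, Nat.add_mul_mod_self_right]

lemma mod_ne_of_lt {n iv r : ℕ} (hiv : iv < n) (hr1 : 1 ≤ r) (hrn : r < n) :
    (iv + r) % n ≠ iv := by
  intro h
  have h2 : (iv + r) % n = iv % n := by rw [h, Nat.mod_eq_of_lt hiv]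
  have h3 : n ∣ (iv + r) - iv := (Nat.modEq_iff_dvd' (Nat.le_add_right _ _)).1 h2.symm
  simp only [Nat.add_sub_cancel_left] at h3
  exact absurd (Nat.le_of_dvd (by omega) h3) (by omega)

lemma cntI_aux {n iv : ℕ} (hiv : iv < n) (j : ℕ) (hj : cntI n iv (iv + j * n) = j) :
    ∀ r, 1 ≤ r → r ≤ n → cntI n iv (iv + j * n + r) = j + 1 := by
  intro r hr1 hrn
  induction r with
  | zero => omega
  | succ r ih =>
    have hstep : iv + j * n + (r + 1) = (iv + j * n + r) + 1 := by omega
    rw [hstep, cntI_succ]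
    rcases Nat.eq_or_lt_of_le hr1 with h1 | h1
    · have hr0 : r = 0 := by omega
      subst hr0
      simp only [Nat.add_zero]
      rw [if_pos (by rw [Nat.add_mul_mod_self_right, Nat.mod_eq_of_lt hiv]), hj]
    · have hr : 1 ≤ r := by omega
      rw [ih hr (by omega), if_neg (by rw [mod_shift]; exact mod_ne_of_lt hiv hr (by omega))]

lemma cntI_stage {n iv : ℕ} (hiv : iv < n) (j : ℕ) : cntI n iv (iv + j * n) = j := by
  induction j with
  | zero =>
    simp only [Nat.zero_mul, Nat.add_zero]
    unfold cntI
    rw [Finset.card_eq_zero, Finset.filter_eq_empty_iff]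
    intro x hx
    rw [Nat.mod_eq_of_lt (lt_trans (Finset.mem_range.1 hx) hiv)]
    exact Nat.ne_of_lt (Finset.mem_range.1 hx)
  | succ j ih =>
    have := cntI_aux hiv j ih n (by omega) le_rfl
    have he : iv + j * n + n = iv + (j + 1) * n := by ring
    rw [← he, this]

lemma cntI_stage_succ {n iv : ℕ} (hiv : iv < n) (j : ℕ) :
    cntI n iv (iv + j * n + 1) = j + 1 := by
  have hn : 0 < n := by omega
  exact cntI_aux hiv j (cntI_stage hiv j) 1 le_rfl hn

section Invariant
variable {n m : ℕ} (f f' : Fin n → Fin m → ℝ) (i : Fin n)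

/-- Main coupling invariant: the difference between the remaining sets of the two runs,
and the size of agent `i`'s bundle in the second run, are bounded by the number of
`i`-stages so far. -/
lemma run_invariant (hff' : ∀ j : Fin n, j ≠ i → f j = f' j) (k : ℕ) :
    ((Rk f' k) \ (Rk f k)).card ≤ cntI n i.val k ∧
      (Bd f' k i).card ≤ cntI n i.val k := by
  have hn : 0 < n := i.pos
  have hiff : ∀ (g : Fin n → Fin m → ℝ) (k : ℕ), (Rk g k).Nonempty ↔ k < m := by
    intro g k
    rw [← Finset.card_pos, card_Rk g hn]
    omega
  induction k with
  | zero => simp [cntI]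
  | succ k ih =>
    rw [cntI_succ]
    by_cases hown : k % n = i.val
    · rw [if_pos hown]
      constructor
      · refine le_trans ?_ (by omega : ((Rk f' k) \ (Rk f k)).card + 1 ≤ _)
        by_cases h : (Rk f k).Nonempty
        · have h' : (Rk f' k).Nonempty := (hiff f' k).2 ((hiff f k).1 h)
          rw [Rk_succ f hn k h, Rk_succ f' hn k h']
          exact sdiff_erase_card_le_succ _ _ _ _
        · have h' : ¬ (Rk f' k).Nonempty := fun hc => h ((hiff f k).2 ((hiff f' k).1 hc))
          rw [Rk_succ_frozen f k h, Rk_succ_frozen f' k h']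
          omega
      · exact le_trans (card_Bd_succ f' hn k i) (by omega)
    · rw [if_neg hown]
      constructor
      · by_cases h : (Rk f k).Nonempty
        · have h' : (Rk f' k).Nonempty := (hiff f' k).2 ((hiff f k).1 h)
          have hne : (⟨k % n, Nat.mod_lt k hn⟩ : Fin n) ≠ i := by
            intro hc; exact hown (by rw [← hc])
          have hfe : f ⟨k % n, Nat.mod_lt k hn⟩ = f' ⟨k % n, Nat.mod_lt k hn⟩ := hff' _ hne
          rw [Rk_succ f hn k h, Rk_succ f' hn k h']
          unfold pk
          rw [hfe]
          exact le_trans (cf_erase_sdiff _ _ _ _ _) ih.1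
        · have h' : ¬ (Rk f' k).Nonempty := fun hc => h ((hiff f k).2 ((hiff f' k).1 hc))
          rw [Rk_succ_frozen f k h, Rk_succ_frozen f' k h']
          exact ih.1
      · rw [Bd_succ_ne f' hn k i hown]
        exact ih.2

/-- Key counting bound: the goods of `i`'s final bundle in run `f'` that are no longer
available in run `f` at stage `k` number at most twice the number of `i`-stages so far. -/
lemma key_count (hff' : ∀ j : Fin n, j ≠ i → f j = f' j) (k : ℕ) :
    ((Bd f' m i) \ (Rk f k)).card ≤ 2 * cntI n i.val k := by
  have hn : 0 < n := i.pos
  have h1 : Bd f' m i ⊆ Bd f' k i ∪ Rk f' k := by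
    rcases le_total m k with h | h
    · exact (Bd_subset f' hn h i).trans Finset.subset_union_left
    · exact Bd_final_subset f' hn h i
  have hsub : (Bd f' m i) \ (Rk f k) ⊆ (Bd f' k i) ∪ ((Rk f' k) \ (Rk f k)) := by
    intro x hx
    rcases Finset.mem_sdiff.1 hx with ⟨hxB, hxR⟩
    rcases Finset.mem_union.1 (h1 hxB) with h | h
    · exact Finset.mem_union_left _ h
    · exact Finset.mem_union_right _ (Finset.mem_sdiff.2 ⟨h, hxR⟩)
  calc ((Bd f' m i) \ (Rk f k)).card
      ≤ (Bd f' k i).card + ((Rk f' k) \ (Rk f k)).card :=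
        le_trans (Finset.card_le_card hsub) (Finset.card_union_le _ _)
    _ ≤ 2 * cntI n i.val k := by
        have := run_invariant f f' i hff' k
        omega

end Invariant
section Canc
variable {m : ℕ} {v : Finset (Fin m) → ℝ}

lemma canc_insert_le (hc : CancelableVal v) {S T : Finset (Fin m)} {g : Fin m}
    (hg : g ∉ S ∪ T) (h : v S ≤ v T) : v (insert g S) ≤ v (insert g T) := by
  by_contra hlt
  push_neg at hlt
  exact absurd (hc S T g hg hlt) (not_lt.2 h)

lemma canc_replace (hc : CancelableVal v) (T : Finset (Fin m)) :
    ∀ {g h : Fin m}, g ∉ T → h ∉ T → v {h} ≤ v {g} → v (insert h T) ≤ v (insert g T) := by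
  induction T using Finset.induction_on with
  | empty => intro g h _ _ hle; simpa using hle
  | insert _ _ ha ih =>
    rename_i a S'
    intro g h hg hh hle
    by_contra hlt
    push_neg at hlt
    rw [Finset.insert_comm h a S', Finset.insert_comm g a S'] at hlt
    have hna : a ∉ insert h S' ∪ insert g S' := by
      simp only [Finset.mem_union, Finset.mem_insert, not_or]
      refine ⟨⟨fun hc' => hh ?_, ha⟩, fun hc' => hg ?_, ha⟩
      · rw [hc']; exact Finset.mem_insert_self _ _
      · rw [hc']; exact Finset.mem_insert_self _ _
    have := hc (insert h S') (insert g S') a hna hlt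
    exact absurd this (not_lt.2 (ih (fun hg' => hg (Finset.mem_insert_of_mem hg'))
      (fun hh' => hh (Finset.mem_insert_of_mem hh')) hle))

lemma image_fin_succ {ℓ : ℕ} (z : Fin (ℓ + 1) → Fin m) :
    Finset.image z Finset.univ =
      insert (z (Fin.last ℓ)) (Finset.image (z ∘ Fin.castSucc) Finset.univ) := by
  rw [Fin.univ_castSuccEmb, Finset.cons_eq_insert, Finset.image_insert,
    Finset.map_eq_image, Finset.image_image]
  rfl

lemma canc_match (hc : CancelableVal v) :
    ∀ (ℓ : ℕ) (x y : Fin ℓ → Fin m), Function.Injective x → Function.Injective y →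
      (∀ j, v {y j} ≤ v {x j}) →
      v (Finset.image y Finset.univ) ≤ v (Finset.image x Finset.univ) := by
  intro ℓ
  induction ℓ with
  | zero => intro x y _ _ _; simp
  | succ ℓ ih =>
    intro x y hx hy hvle
    set d := y (Fin.last ℓ) with hd
    by_cases hdr : ∃ j, x j = d
    · obtain ⟨j, hj⟩ := hdr
      set x' : Fin (ℓ + 1) → Fin m := x ∘ Equiv.swap j (Fin.last ℓ) with hx'
      have hx'inj : Function.Injective x' := hx.comp (Equiv.injective _)
      have himg : Finset.image x' Finset.univ = Finset.image x Finset.univ := by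
        ext g
        simp only [Finset.mem_image, Finset.mem_univ, true_and, hx', Function.comp_apply]
        constructor
        · rintro ⟨a, rfl⟩; exact ⟨_, rfl⟩
        · rintro ⟨a, rfl⟩; exact ⟨Equiv.swap j (Fin.last ℓ) a,
            by rw [Equiv.swap_apply_self]⟩
      have hx'last : x' (Fin.last ℓ) = d := by
        rw [hx', Function.comp_apply, Equiv.swap_apply_right, hj]
      have hvle' : ∀ k, v {y k} ≤ v {x' k} := by
        intro k
        by_cases hkj : k = j
        · subst hkj
          by_cases hkl : k = Fin.last ℓ
          · subst hkl; rw [hx'last]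
          · have : x' k = x (Fin.last ℓ) := by
              rw [hx', Function.comp_apply, Equiv.swap_apply_left]
            rw [this]
            calc v {y k} ≤ v {x k} := hvle k
              _ = v {d} := by rw [hj]
              _ = v {y (Fin.last ℓ)} := by rw [hd]
              _ ≤ v {x (Fin.last ℓ)} := hvle _
        · by_cases hkl : k = Fin.last ℓ
          · subst hkl; rw [hx'last]
          · have : x' k = x k := by
              rw [hx', Function.comp_apply, Equiv.swap_apply_of_ne_of_ne hkj hkl]
            rw [this]; exact hvle k
      rw [← himg]
      -- now x' (last) = y (last) = d
      have hIH := ih (x' ∘ Fin.castSucc) (y ∘ Fin.castSucc)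
        (hx'inj.comp (Fin.castSucc_injective ℓ)) (hy.comp (Fin.castSucc_injective ℓ))
        (fun k => hvle' _)
      have hdX : d ∉ Finset.image (x' ∘ Fin.castSucc) Finset.univ := by
        simp only [Finset.mem_image, Finset.mem_univ, true_and, Function.comp_apply, not_exists]
        intro a ha
        have := hx'inj (ha.trans hx'last.symm)
        exact absurd this (Fin.ne_of_lt (Fin.castSucc_lt_last a))
      have hdY : d ∉ Finset.image (y ∘ Fin.castSucc) Finset.univ := by
        simp only [Finset.mem_image, Finset.mem_univ, true_and, Function.comp_apply, not_exists]
        intro a ha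
        have := hy (ha.trans hd.symm ▸ ha)
        have := hy (show y a.castSucc = y (Fin.last ℓ) from ha)
        exact absurd this (Fin.ne_of_lt (Fin.castSucc_lt_last a))
      have := canc_insert_le hc (Finset.notMem_union.2 ⟨hdY, hdX⟩) hIH
      rw [image_fin_succ x', image_fin_succ y, hx'last, ← hd]
      exact this
    · push_neg at hdr
      have hIH := ih (x ∘ Fin.castSucc) (y ∘ Fin.castSucc)
        (hx.comp (Fin.castSucc_injective ℓ)) (hy.comp (Fin.castSucc_injective ℓ))
        (fun k => hvle _)
      have hdX : d ∉ Finset.image (x ∘ Fin.castSucc) Finset.univ := by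
        simp only [Finset.mem_image, Finset.mem_univ, true_and, Function.comp_apply, not_exists]
        intro a ha
        exact hdr _ ha
      have hdY : d ∉ Finset.image (y ∘ Fin.castSucc) Finset.univ := by
        simp only [Finset.mem_image, Finset.mem_univ, true_and, Function.comp_apply, not_exists]
        intro a ha
        have := hy (show y a.castSucc = y (Fin.last ℓ) from ha)
        exact absurd this (Fin.ne_of_lt (Fin.castSucc_lt_last a))
      have h1 := canc_insert_le hc (Finset.notMem_union.2 ⟨hdY, hdX⟩) hIH
      have hclast : x (Fin.last ℓ) ∉ Finset.image (x ∘ Fin.castSucc) Finset.univ := by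
        simp only [Finset.mem_image, Finset.mem_univ, true_and, Function.comp_apply, not_exists]
        intro a ha
        exact absurd (hx ha) (Fin.ne_of_lt (Fin.castSucc_lt_last a))
      have h2 := canc_replace hc (Finset.image (x ∘ Fin.castSucc) Finset.univ)
        hclast hdX (hvle (Fin.last ℓ))
      rw [image_fin_succ x, image_fin_succ y, ← hd]
      exact h1.trans h2
end Canc
section Comb
variable {β : Type*} [DecidableEq β]

lemma comb_schedule (N : ℕ) :
    ∀ (B : Finset β), B.card ≤ N → ∀ (w : β → ℕ),
      (∀ j : ℕ, (B.filter (fun b => w b ≤ j)).card ≤ 2 * j) →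
      ∃ (X Y : Finset β) (ψX ψY : β → ℕ), X ∪ Y = B ∧
        Set.InjOn ψX X ∧ Set.InjOn ψY Y ∧
        (∀ b ∈ X, 1 ≤ ψX b ∧ ψX b ≤ w b) ∧ (∀ b ∈ Y, 1 ≤ ψY b ∧ ψY b ≤ w b) := by
  induction N with
  | zero =>
    intro B hB w _
    have : B = ∅ := Finset.card_eq_zero.1 (Nat.le_zero.1 hB)
    subst this
    exact ⟨∅, ∅, fun _ => 1, fun _ => 1, by simp, by simp [Set.InjOn], by simp [Set.InjOn],
      by simp, by simp⟩
  | succ N ihN =>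
    intro B hB w hcond
    rcases Finset.eq_empty_or_nonempty B with rfl | hBne
    · exact ⟨∅, ∅, fun _ => 1, fun _ => 1, by simp, by simp [Set.InjOn], by simp [Set.InjOn],
        by simp, by simp⟩
    have hw1 : ∀ b ∈ B, 1 ≤ w b := by
      intro b hb
      by_contra hlt
      have hb0 : b ∈ B.filter (fun b => w b ≤ 0) := Finset.mem_filter.2 ⟨hb, by omega⟩
      have := hcond 0
      rw [Nat.mul_zero, Nat.le_zero, Finset.card_eq_zero] at this
      rw [this] at hb0
      exact absurd hb0 (Finset.notMem_empty b)
    obtain ⟨b1, hb1B, hb1min⟩ := Finset.exists_min_image B w hBne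
    set B1 := B.erase b1 with hB1
    rcases Finset.eq_empty_or_nonempty B1 with hB1e | hB1ne
    · refine ⟨{b1}, ∅, fun _ => 1, fun _ => 1, ?_,
        (fun a ha b hb _ => by
          rw [Finset.coe_singleton, Set.mem_singleton_iff] at ha hb
          rw [ha, hb]),
        (by rw [Finset.coe_empty]; exact Set.injOn_empty _), ?_, by simp⟩
      · rw [Finset.union_empty]
        have h2 : insert b1 B1 = B := by rw [hB1]; exact Finset.insert_erase hb1B
        rw [hB1e] at h2
        simpa using h2
      · intro b hb
        rw [Finset.mem_singleton] at hb
        subst hb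
        exact ⟨le_rfl, hw1 _ hb1B⟩
    obtain ⟨b2, hb2B1, hb2min⟩ := Finset.exists_min_image B1 w hB1ne
    have hb2B : b2 ∈ B := Finset.mem_of_mem_erase hb2B1
    have hb12 : b1 ≠ b2 := fun h => (Finset.mem_erase.1 hb2B1).1 h.symm
    set B' := B1.erase b2 with hB'
    have hcardB' : B'.card ≤ N := by
      have h1 : B1.card = B.card - 1 := Finset.card_erase_of_mem hb1B
      have h2 : B'.card = B1.card - 1 := Finset.card_erase_of_mem hb2B1
      have : 1 ≤ B.card := Finset.card_pos.2 hBne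
      omega
    have hcond' : ∀ j : ℕ, (B'.filter (fun b => w b - 1 ≤ j)).card ≤ 2 * j := by
      intro j
      have hiff : B'.filter (fun b => w b - 1 ≤ j) = B'.filter (fun b => w b ≤ j + 1) := by
        apply Finset.filter_congr
        intro b hb
        have := hw1 b (Finset.mem_of_mem_erase (Finset.mem_of_mem_erase hb))
        omega
      rw [hiff]
      rcases Finset.eq_empty_or_nonempty (B'.filter (fun b => w b ≤ j + 1)) with he | hne
      · rw [he]; simp
      · obtain ⟨b, hbmem⟩ := hne
        rcases Finset.mem_filter.1 hbmem with ⟨hbB', hbw⟩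
        have hbB1 : b ∈ B1 := Finset.mem_of_mem_erase hbB'
        have hbB : b ∈ B := Finset.mem_of_mem_erase hbB1
        have hw2 : w b2 ≤ j + 1 := le_trans (hb2min b hbB1) hbw
        have hw1' : w b1 ≤ j + 1 := le_trans (hb1min b hbB) hbw
        have heq : B'.filter (fun b => w b ≤ j + 1) =
            ((B.filter (fun b => w b ≤ j + 1)).erase b1).erase b2 := by
          rw [hB', hB1, Finset.filter_erase, Finset.filter_erase]
        have hb1f : b1 ∈ B.filter (fun b => w b ≤ j + 1) := Finset.mem_filter.2 ⟨hb1B, hw1'⟩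
        have hb2f : b2 ∈ (B.filter (fun b => w b ≤ j + 1)).erase b1 :=
          Finset.mem_erase.2 ⟨hb12.symm, Finset.mem_filter.2 ⟨hb2B, hw2⟩⟩
        rw [heq, Finset.card_erase_of_mem hb2f, Finset.card_erase_of_mem hb1f]
        have := hcond (j + 1)
        omega
    obtain ⟨X', Y', ψX', ψY', hXY', hinjX', hinjY', hbX', hbY'⟩ :=
      ihN B' hcardB' (fun b => w b - 1) hcond'
    have hX'B' : X' ⊆ B' := hXY' ▸ Finset.subset_union_left
    have hY'B' : Y' ⊆ B' := hXY' ▸ Finset.subset_union_right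
    have hb1X' : b1 ∉ X' := fun h => (Finset.mem_erase.1 (Finset.mem_of_mem_erase (hX'B' h))).1 rfl
    have hb1Y' : b1 ∉ Y' := fun h => (Finset.mem_erase.1 (Finset.mem_of_mem_erase (hY'B' h))).1 rfl
    have hb2X' : b2 ∉ X' := fun h => (Finset.mem_erase.1 (hX'B' h)).1 rfl
    have hb2Y' : b2 ∉ Y' := fun h => (Finset.mem_erase.1 (hY'B' h)).1 rfl
    refine ⟨insert b1 X', insert b2 Y',
      (fun b => if b = b1 then 1 else ψX' b + 1), (fun b => if b = b2 then 1 else ψY' b + 1),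
      ?_, ?_, ?_, ?_, ?_⟩
    · rw [Finset.insert_union, Finset.union_insert, hXY', hB',
        Finset.insert_erase hb2B1, hB1, Finset.insert_erase hb1B]
    · intro a ha b hb hab
      dsimp only at hab
      have ha' := Finset.mem_insert.1 (Finset.mem_coe.1 ha)
      have hb' := Finset.mem_insert.1 (Finset.mem_coe.1 hb)
      by_cases hab1 : a = b1 <;> by_cases hbb1 : b = b1
      · rw [hab1, hbb1]
      · exfalso
        rw [if_pos hab1, if_neg hbb1] at hab
        have hbX : b ∈ X' := hb'.resolve_left hbb1
        have := (hbX' b hbX).1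
        omega
      · exfalso
        rw [if_neg hab1, if_pos hbb1] at hab
        have haX : a ∈ X' := ha'.resolve_left hab1
        have := (hbX' a haX).1
        omega
      · rw [if_neg hab1, if_neg hbb1] at hab
        exact hinjX' (Finset.mem_coe.2 (ha'.resolve_left hab1))
          (Finset.mem_coe.2 (hb'.resolve_left hbb1)) (by omega)
    · intro a ha b hb hab
      dsimp only at hab
      have ha' := Finset.mem_insert.1 (Finset.mem_coe.1 ha)
      have hb' := Finset.mem_insert.1 (Finset.mem_coe.1 hb)
      by_cases hab1 : a = b2 <;> by_cases hbb1 : b = b2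
      · rw [hab1, hbb1]
      · exfalso
        rw [if_pos hab1, if_neg hbb1] at hab
        have hbX : b ∈ Y' := hb'.resolve_left hbb1
        have := (hbY' b hbX).1
        omega
      · exfalso
        rw [if_neg hab1, if_pos hbb1] at hab
        have haX : a ∈ Y' := ha'.resolve_left hab1
        have := (hbY' a haX).1
        omega
      · rw [if_neg hab1, if_neg hbb1] at hab
        exact hinjY' (Finset.mem_coe.2 (ha'.resolve_left hab1))
          (Finset.mem_coe.2 (hb'.resolve_left hbb1)) (by omega)
    · intro b hb
      dsimp only
      by_cases hbb1 : b = b1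
      · rw [if_pos hbb1, hbb1]
        exact ⟨le_rfl, hw1 _ hb1B⟩
      · rw [if_neg hbb1]
        have hbX : b ∈ X' := (Finset.mem_insert.1 hb).resolve_left hbb1
        have h1 := hbX' b hbX
        have h2 := hw1 b (Finset.mem_of_mem_erase (Finset.mem_of_mem_erase (hX'B' hbX)))
        omega
    · intro b hb
      dsimp only
      by_cases hbb1 : b = b2
      · rw [if_pos hbb1, hbb1]
        exact ⟨le_rfl, hw1 _ hb2B⟩
      · rw [if_neg hbb1]
        have hbX : b ∈ Y' := (Finset.mem_insert.1 hb).resolve_left hbb1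
        have h1 := hbY' b hbX
        have h2 := hw1 b (Finset.mem_of_mem_erase (Finset.mem_of_mem_erase (hY'B' hbX)))
        omega

end Comb
section Assembly
variable {n m : ℕ}

lemma half_bound (v : Fin n → Finset (Fin m) → ℝ) (i : Fin n)
    (hmono : ∀ S T : Finset (Fin m), S ⊆ T → v i S ≤ v i T) (hcanc : CancelableVal (v i))
    (X : Finset (Fin m)) (ψ : Fin m → ℕ) (hinj : Set.InjOn ψ ↑X)
    (hval : ∀ b ∈ X, 1 ≤ ψ b ∧ (i.val + (ψ b - 1) * n < m) ∧
      b ∈ Rk (fun j g => v j {g}) (i.val + (ψ b - 1) * n)) :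
    v i X ≤ v i (Bd (fun j g => v j {g}) m i) := by
  classical
  have hn : 0 < n := i.pos
  set f : Fin n → Fin m → ℝ := fun j g => v j {g} with hfdef
  set ℓ := X.card with hl
  set y : Fin ℓ → Fin m := fun k => ((X.equivFin.symm k : {x // x ∈ X}) : Fin m) with hy
  have hymem : ∀ k, y k ∈ X := fun k => (X.equivFin.symm k).2
  have hyinj : Function.Injective y := by
    intro k k' h
    exact X.equivFin.symm.injective (Subtype.coe_injective h)
  have hyimg : Finset.image y Finset.univ = X := by
    ext g
    simp only [Finset.mem_image, Finset.mem_univ, true_and]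
    constructor
    · rintro ⟨k, rfl⟩; exact hymem k
    · intro hg
      exact ⟨X.equivFin ⟨g, hg⟩, by rw [hy]; simp⟩
  set sk : Fin ℓ → ℕ := fun k => i.val + (ψ (y k) - 1) * n with hsk
  have hs : ∀ k, sk k < m := fun k => (hval (y k) (hymem k)).2.1
  have hne : ∀ k, (Rk f (sk k)).Nonempty := fun k => Rk_nonempty f hn _ (hs k)
  set x : Fin ℓ → Fin m := fun k => pk f hn (sk k) (hne k) with hx
  have hmod : ∀ k, (sk k) % n = i.val := by
    intro k
    rw [hsk]
    simp only []
    rw [Nat.add_mul_mod_self_right, Nat.mod_eq_of_lt i.isLt]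
  have hidx : ∀ k, (⟨sk k % n, Nat.mod_lt _ hn⟩ : Fin n) = i := fun k => Fin.ext (hmod k)
  have hxA : ∀ k, x k ∈ Bd f m i := by
    intro k
    have hb := Bd_succ_own f hn (sk k) (hne k)
    rw [hidx k] at hb
    have hmem : x k ∈ Bd f (sk k + 1) i := by
      rw [hb]; exact Finset.mem_insert_self _ _
    exact Bd_subset f hn (hs k) i hmem
  have hkey : ∀ k k', ψ (y k) < ψ (y k') → x k ≠ x k' := by
    intro k k' hlt heq
    have h1 : 1 ≤ ψ (y k) := (hval (y k) (hymem k)).1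
    have hle : sk k + 1 ≤ sk k' := by
      rw [hsk]
      simp only []
      have hmul : (ψ (y k) - 1 + 1) * n ≤ (ψ (y k') - 1) * n :=
        Nat.mul_le_mul_right n (by omega)
      rw [Nat.add_mul] at hmul
      omega
    have hxk' : x k' ∈ Rk f (sk k + 1) :=
      Rk_subset f hn hle (pk_mem f hn (sk k') (hne k'))
    rw [← heq] at hxk'
    rw [Rk_succ f hn (sk k) (hne k)] at hxk'
    exact (Finset.mem_erase.1 hxk').1 rfl
  have hxinj : Function.Injective x := by
    intro k k' heq
    by_contra hkk
    have hyne : y k ≠ y k' := fun h => hkk (hyinj h)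
    have hψne : ψ (y k) ≠ ψ (y k') := fun h => hyne (hinj (hymem k) (hymem k') h)
    rcases Nat.lt_or_ge (ψ (y k)) (ψ (y k')) with h | h
    · exact hkey k k' h heq
    · exact hkey k' k (by omega) heq.symm
  have hpw : ∀ k, v i {y k} ≤ v i {x k} := by
    intro k
    have := pk_max f hn (sk k) (hne k) (y k) (hval (y k) (hymem k)).2.2
    rw [hidx k] at this
    exact this
  calc v i X = v i (Finset.image y Finset.univ) := by rw [hyimg]
    _ ≤ v i (Finset.image x Finset.univ) := canc_match hcanc ℓ x y hxinj hyinj hpw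
    _ ≤ v i (Bd f m i) := hmono _ _ (by
        intro g hg
        rcases Finset.mem_image.1 hg with ⟨k, _, rfl⟩
        exact hxA k)

end Assembly

/-- Round-Robin (Mechanism 1) admits an incentive ratio of at most 2 for subadditive
cancelable valuations: if agent `i`'s true valuation is subadditive and cancelable, then
for every normalized monotone misreport `v'`, the bundle agent `i` receives under the
misreport is worth at most twice the bundle he receives under truthful reporting. -/
theorem roundRobin1_incentive_subadditive_cancelable {n m : ℕ}
    (v : Fin n → Finset (Fin m) → ℝ) (hv : ∀ j, IsValuation (v j)) (i : Fin n)
    (hsub : SubadditiveVal (v i)) (hcanc : CancelableVal (v i))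
    (v' : Finset (Fin m) → ℝ) (hv' : IsValuation v') :
    v i (roundRobin1 (Function.update v i v') i) ≤ 2 * v i (roundRobin1 v i) := by
  classical
  have hn : 0 < n := i.pos
  set f : Fin n → Fin m → ℝ := fun j g => v j {g} with hfdef
  set f' : Fin n → Fin m → ℝ := fun j g => Function.update v i v' j {g} with hf'def
  have hA : roundRobin1 v i = Bd f m i := rfl
  have hB : roundRobin1 (Function.update v i v') i = Bd f' m i := rfl
  rw [hA, hB]
  have hff' : ∀ j, j ≠ i → f j = f' j := by
    intro j hj
    funext g
    show v j {g} = Function.update v i v' j {g}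
    rw [Function.update_of_ne hj]
  set Bi := Bd f' m i with hBi
  set F : Fin m → Finset ℕ := fun b =>
    (Finset.Icc 1 m).filter (fun r => i.val + (r - 1) * n < m ∧ b ∈ Rk f (i.val + (r - 1) * n))
    with hF
  set w : Fin m → ℕ := fun b => (F b).card with hw
  have hdc : ∀ (b : Fin m) (r' r : ℕ), 1 ≤ r' → r' ≤ r → r ∈ F b → r' ∈ F b := by
    intro b r' r h1 h2 hr
    rcases Finset.mem_filter.1 hr with ⟨hIcc, hst, hR⟩
    rcases Finset.mem_Icc.1 hIcc with ⟨_, hrm⟩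
    have hstle : i.val + (r' - 1) * n ≤ i.val + (r - 1) * n :=
      Nat.add_le_add_left (Nat.mul_le_mul_right n (by omega)) _
    refine Finset.mem_filter.2 ⟨Finset.mem_Icc.2 ⟨h1, le_trans h2 hrm⟩, by omega, ?_⟩
    exact Rk_subset f hn hstle hR
  have hwprop : ∀ (b : Fin m) (r : ℕ), 1 ≤ r → r ≤ w b →
      i.val + (r - 1) * n < m ∧ b ∈ Rk f (i.val + (r - 1) * n) := by
    intro b r h1 h2
    have hrF : r ∈ F b := by
      by_contra hrF
      have hsub' : F b ⊆ Finset.Icc 1 (r - 1) := by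
        intro x hx
        rcases Finset.mem_Icc.1 (Finset.mem_filter.1 hx).1 with ⟨hx1, _⟩
        refine Finset.mem_Icc.2 ⟨hx1, ?_⟩
        by_contra hxr
        exact hrF (hdc b r x h1 (by omega) hx)
      have hcc := Finset.card_le_card hsub'
      rw [Nat.card_Icc] at hcc
      have hwb : w b = (F b).card := rfl
      omega
    exact (Finset.mem_filter.1 hrF).2
  have hw_cond : ∀ j : ℕ, (Bi.filter (fun b => w b ≤ j)).card ≤ 2 * j := by
    intro j
    by_cases hjm : i.val + j * n < m
    · have hsub' : Bi.filter (fun b => w b ≤ j) ⊆ Bi \ Rk f (i.val + j * n) := by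
        intro b hb
        rcases Finset.mem_filter.1 hb with ⟨hbB, hbw⟩
        refine Finset.mem_sdiff.2 ⟨hbB, fun hbR => ?_⟩
        have hjn : j ≤ j * n := Nat.le_mul_of_pos_right j hn
        have hwb : w b = (F b).card := rfl
        have hj1 : j + 1 ∈ F b := by
          refine Finset.mem_filter.2 ⟨Finset.mem_Icc.2 ⟨by omega, by omega⟩, ?_, ?_⟩
          · rw [Nat.add_sub_cancel]; exact hjm
          · rw [Nat.add_sub_cancel]; exact hbR
        have hIccF : Finset.Icc 1 (j + 1) ⊆ F b := by
          intro r' hr'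
          rcases Finset.mem_Icc.1 hr' with ⟨h1, h2⟩
          exact hdc b r' (j + 1) h1 h2 hj1
        have hcard : j + 1 ≤ w b := by
          have hcc := Finset.card_le_card hIccF
          rw [Nat.card_Icc] at hcc
          omega
        omega
      calc (Bi.filter (fun b => w b ≤ j)).card
          ≤ (Bi \ Rk f (i.val + j * n)).card := Finset.card_le_card hsub'
        _ ≤ 2 * cntI n i.val (i.val + j * n) := key_count f f' i hff' _
        _ = 2 * j := by rw [cntI_stage i.isLt j]
    · push_neg at hjm
      have h1 : (Bi.filter (fun b => w b ≤ j)).card ≤ Bi.card := Finset.card_filter_le _ _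
      have h2 : Bi.card ≤ cntI n i.val m := (run_invariant f f' i hff' m).2
      have h3 : cntI n i.val m ≤ cntI n i.val (i.val + j * n) := cntI_mono _ _ hjm
      rw [cntI_stage i.isLt j] at h3
      omega
  obtain ⟨X, Y, ψX, ψY, hXY, hinjX, hinjY, hbX, hbY⟩ :=
    comb_schedule Bi.card Bi le_rfl w hw_cond
  have hmono := (hv i).2
  have hXle : v i X ≤ v i (Bd f m i) := by
    refine half_bound v i hmono hcanc X ψX hinjX (fun b hb => ?_)
    obtain ⟨h1, h2⟩ := hbX b hb
    obtain ⟨h3, h4⟩ := hwprop b (ψX b) h1 h2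
    exact ⟨h1, h3, h4⟩
  have hYle : v i Y ≤ v i (Bd f m i) := by
    refine half_bound v i hmono hcanc Y ψY hinjY (fun b hb => ?_)
    obtain ⟨h1, h2⟩ := hbY b hb
    obtain ⟨h3, h4⟩ := hwprop b (ψY b) h1 h2
    exact ⟨h1, h3, h4⟩
  calc v i Bi = v i (X ∪ Y) := by rw [hXY]
    _ ≤ v i X + v i Y := hsub X Y
    _ ≤ 2 * v i (Bd f m i) := by linarith
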